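/- arXiv:2506.10388 — 2 statements merged into one kernel-verified Lean document; each statement's English description precedes it below -/
import Mathlib

section
/- Let {S(t) : t ≥ 0} be a semigroup on a metric space (V,d), T > 0, and let B be a nonempty bounded subset of V with S(T)B ⊆ B. If the semigroup is quasi-stable on B at time T with respect to a compact seminorm 𝔫_Z on a normed space Z and parameters (η,κ), then for any σ ∈ (0,1−η) the covering condition N^V(S(kT)B, a·q^k) ≤ b·h^k holds for all k ∈ ℕ with q = η+σ, h = 𝔪_Z(σ/(2κ)), a = (3/2)·max{diam^V(B),1} and b = 1. -/
open Filter Metric Set Topology Bornology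
open scoped ENNReal

section Defs

variable {V : Type*} [MetricSpace V]

/-- A semigroup (semiflow) of maps `S t : V → V`, `t ∈ [0,∞)`. -/
def IsSemiflow (S : ℝ → V → V) : Prop :=
  (∀ x : V, S 0 x = x) ∧ ∀ t s : ℝ, 0 ≤ t → 0 ≤ s → ∀ x : V, S t (S s x) = S (t + s) x

/-- One-sided Hausdorff distance `dist^V(G,A) = sup_{x∈G} inf_{y∈A} d(x,y)` (in `ℝ≥0∞`). -/
noncomputable def attrDist (G A : Set V) : ℝ≥0∞ :=
  ⨆ x ∈ G, EMetric.infEdist x A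

/-- The set `A` attracts all bounded subsets of `V`. -/
def AttractsSet (S : ℝ → V → V) (A : Set V) : Prop :=
  ∀ G : Set V, IsBounded G → Tendsto (fun t : ℝ => attrDist (S t '' G) A) atTop (𝓝 0)

/-- A global attractor: nonempty, compact, invariant, attracts all bounded sets. -/
def IsGlobalAttr (S : ℝ → V → V) (A : Set V) : Prop :=
  A.Nonempty ∧ IsCompact A ∧ (∀ t : ℝ, 0 ≤ t → S t '' A = A) ∧ AttractsSet S A

/-- `B` is an absorbing set for the semigroup. -/
def IsAbsorbingSet (S : ℝ → V → V) (B : Set V) : Prop :=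
  ∀ G : Set V, IsBounded G → ∃ tG : ℝ, 0 ≤ tG ∧ ∀ t : ℝ, tG ≤ t → S t '' G ⊆ B

/-- The semigroup is asymptotically closed. -/
def AsympClosed (S : ℝ → V → V) : Prop :=
  ∀ t : ℝ, 0 ≤ t → ∀ tk : ℕ → ℝ, (∀ k, 0 ≤ tk k) → Tendsto tk atTop atTop →
    ∀ xk : ℕ → V, IsBounded (range xk) → ∀ x y : V,
      Tendsto (fun k => S (tk k) (xk k)) atTop (𝓝 x) →
      Tendsto (fun k => S (t + tk k) (xk k)) atTop (𝓝 y) → S t x = y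

/-- The ω-limit set `Λ^V(G) = ⋂_{s ≥ 0} cl_V ⋃_{t ≥ s} S(t)G`. -/
def omegaLim (S : ℝ → V → V) (G : Set V) : Set V :=
  ⋂ (s : ℝ) (_ : 0 ≤ s), closure (⋃ (t : ℝ) (_ : s ≤ t), S t '' G)

/-- `N^V(G,ε)`: minimal number of open `ε`-balls centered in `G` needed to cover `G`. -/
noncomputable def coverN (G : Set V) (ε : ℝ) : ℝ≥0∞ :=
  ⨅ (F : Finset V) (_ : ↑F ⊆ G) (_ : G ⊆ ⋃ x ∈ F, ball x ε), (F.card : ℝ≥0∞)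

open Classical in
/-- Fractal (box-counting) dimension `limsup_{ε→0⁺} log N^V(M,ε) / log (1/ε)`. -/
noncomputable def fracDim (M : Set V) : ℝ≥0∞ :=
  limsup (fun ε : ℝ =>
    if coverN M ε = ⊤ then (⊤ : ℝ≥0∞)
    else ENNReal.ofReal (Real.log (coverN M ε).toReal / Real.log (1 / ε))) (𝓝[>] (0 : ℝ))

/-- `M` attracts all bounded sets at exponential rate `ξ`. -/
def ExpAttractsAt (S : ℝ → V → V) (M : Set V) (ξ : ℝ) : Prop :=
  ∀ G : Set V, IsBounded G →
    Tendsto (fun t : ℝ => ENNReal.ofReal (Real.exp (ξ * t)) * attrDist (S t '' G) M)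
      atTop (𝓝 0)

/-- A `T`-discrete exponential attractor. -/
def IsDiscExpAttr (S : ℝ → V → V) (T : ℝ) (M : Set V) : Prop :=
  M.Nonempty ∧ IsCompact M ∧ S T '' M ⊆ M ∧ fracDim M ≠ ⊤ ∧
    ∃ ξ : ℝ, 0 < ξ ∧ ExpAttractsAt S M ξ

/-- The covering condition `N^V(S(kT)B, a·qᵏ) ≤ b·hᵏ` for `k ≥ k₀`. -/
def CoveringCond (S : ℝ → V → V) (T : ℝ) (B : Set V) (k₀ : ℕ) (a b q h : ℝ) : Prop :=
  ∀ k : ℕ, k₀ ≤ k →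
    coverN (S (k * T) '' B) (a * q ^ k) ≤ ENNReal.ofReal (b * h ^ k)

end Defs

section QSDefs

/-- `m_ρ(F,ε)`: the maximal cardinality of an `ε`-distinguishable (w.r.t. `ρ`) subset of `F`. -/
noncomputable def maxDisting {α : Type*} (ρ : α → α → ℝ) (F : Set α) (ε : ℝ) : ℝ≥0∞ :=
  ⨆ (U : Finset α) (_ : ↑U ⊆ F) (_ : ∀ x ∈ U, ∀ y ∈ U, x ≠ y → ε ≤ ρ x y),
    (U.card : ℝ≥0∞)

variable {Z : Type*} [NormedAddCommGroup Z]

/-- `n` is a seminorm on `Z`. -/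
def IsSeminormFun [NormedSpace ℝ Z] (n : Z → ℝ) : Prop :=
  (∀ z, 0 ≤ n z) ∧ (∀ z w, n (z + w) ≤ n z + n w) ∧
    (∀ (c : ℝ) (z : Z), n (c • z) = |c| * n z)

/-- `n` is a compact seminorm: every bounded sequence has an `n`-Cauchy subsequence. -/
def IsCompactSeminorm (n : Z → ℝ) : Prop :=
  ∀ zk : ℕ → Z, IsBounded (range zk) → ∃ φ : ℕ → ℕ, StrictMono φ ∧
    ∀ δ : ℝ, 0 < δ → ∃ N : ℕ, ∀ j ≥ N, ∀ l ≥ N, n (zk (φ j) - zk (φ l)) < δ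

variable {V : Type*} [MetricSpace V]

/-- Quasi-stability of the semigroup on `B` at time `T` w.r.t. the seminorm `n` on `Z`
with parameters `(η,κ)`. -/
def QuasiStable (S : ℝ → V → V) (T : ℝ) (B : Set V) (n : Z → ℝ) (η κ : ℝ) : Prop :=
  ∃ K : V → Z, (∀ x ∈ B, ∀ y ∈ B, ‖K x - K y‖ ≤ κ * dist x y) ∧
    (∀ x ∈ B, ∀ y ∈ B, dist (S T x) (S T y) ≤ η * dist x y + n (K x - K y))

/-- `𝔪_Z(μ)`: maximal cardinality of a `μ`-distinguishable (w.r.t. the seminorm `n`)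
subset of the closed unit ball of `Z`. -/
noncomputable def mZ (n : Z → ℝ) (μ : ℝ) : ℝ≥0∞ :=
  maxDisting (fun z w => n (z - w)) (closedBall (0 : Z) 1) μ

end QSDefs

set_option linter.unusedSectionVars false

section MyAux
variable {V : Type*} [MetricSpace V] {Z : Type*} [NormedAddCommGroup Z] [NormedSpace ℝ Z]

lemma aux_n_zero {n : Z → ℝ} (hsn : IsSeminormFun n) : n 0 = 0 := by
  have := hsn.2.2 0 0; simpa using this


lemma aux_n_neg {n : Z → ℝ} (hsn : IsSeminormFun n) (z : Z) : n (-z) = n z := by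
  have := hsn.2.2 (-1) z; simpa using this


lemma aux_n_tri {n : Z → ℝ} (hsn : IsSeminormFun n) (a b c : Z) :
    n (a - b) ≤ n (a - c) + n (c - b) := by
  have := hsn.2.1 (a - c) (c - b); simpa using this


lemma mZ_card_le {n : Z → ℝ} {μ : ℝ} (U : Finset Z)
    (h1 : ↑U ⊆ closedBall (0:Z) 1)
    (h2 : ∀ x ∈ U, ∀ y ∈ U, x ≠ y → μ ≤ n (x - y)) :
    (U.card : ℝ≥0∞) ≤ mZ n μ := by
  unfold mZ maxDisting
  exact le_iSup_of_le U (le_iSup_of_le h1 (le_iSup_of_le h2 le_rfl))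


lemma one_le_mZ (n : Z → ℝ) (μ : ℝ) : (1 : ℝ≥0∞) ≤ mZ n μ := by
  have h := mZ_card_le (n := n) (μ := μ) {0} (by simp) ?_
  · simpa using h
  · intro x hx y hy hxy
    simp only [Finset.mem_singleton] at hx hy
    exact absurd (hx.trans hy.symm) hxy

variable {V : Type*} [MetricSpace V]


lemma core_step {S : ℝ → V → V} {T : ℝ} {B : Set V} {n : Z → ℝ} {η κ σ : ℝ}
    (hsn : IsSeminormFun n) (hκ : 0 < κ) (hσ : 0 < σ) (hη0 : 0 ≤ η)
    (K : V → Z) (hK1 : ∀ x ∈ B, ∀ y ∈ B, ‖K x - K y‖ ≤ κ * dist x y)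
    (hK2 : ∀ x ∈ B, ∀ y ∈ B, dist (S T x) (S T y) ≤ η * dist x y + n (K x - K y))
    (hm : mZ n (σ / (2*κ)) ≠ ⊤)
    (p : Set V) (hpB : p ⊆ B) (D : ℝ) (hD : 0 ≤ D)
    (hpd : ∀ x ∈ p, ∀ y ∈ p, dist x y ≤ D) :
    ∃ Q : Finset (Set V), (Q.card : ℝ≥0∞) ≤ mZ n (σ / (2*κ)) ∧
      (S T '' p ⊆ ⋃ s ∈ Q, s) ∧
      ∀ s ∈ Q, s ⊆ S T '' p ∧ ∀ u ∈ s, ∀ v ∈ s, dist u v ≤ (η + σ) * D := by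
  classical
  set μ := σ / (2*κ) with hμdef
  have hμ : 0 < μ := div_pos hσ (by linarith)
  rcases p.eq_empty_or_nonempty with hp | ⟨x₀, hx₀⟩
  · exact ⟨∅, by simp, by simp [hp], by simp⟩
  rcases eq_or_lt_of_le hD with hD0 | hDpos
  · -- D = 0 : p is a single point
    refine ⟨{S T '' p}, by simpa using one_le_mZ n μ, by simp, ?_⟩
    intro s hs
    simp only [Finset.mem_singleton] at hs
    subst hs
    refine ⟨subset_rfl, ?_⟩
    rintro u ⟨x, hx, rfl⟩ v ⟨y, hy, rfl⟩
    have hxy : x = y := by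
      have := hpd x hx y hy
      rw [← hD0] at this
      exact eq_of_dist_eq_zero (le_antisymm this dist_nonneg)
    simp [hxy, ← hD0]
  · -- D > 0
    set c := κ * D with hc
    have hcpos : 0 < c := mul_pos hκ hDpos
    set f : V → Z := fun x => c⁻¹ • (K x - K x₀) with hf
    have hfball : ∀ x ∈ p, f x ∈ closedBall (0:Z) 1 := by
      intro x hx
      simp only [mem_closedBall, dist_zero_right, hf, norm_smul, norm_inv,
        Real.norm_eq_abs, abs_of_pos hcpos]
      have h1 : ‖K x - K x₀‖ ≤ κ * D :=
        (hK1 x (hpB hx) x₀ (hpB hx₀)).trans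
          (by
            have := hpd x hx x₀ hx₀
            nlinarith)
      calc c⁻¹ * ‖K x - K x₀‖ ≤ c⁻¹ * c := by
            apply mul_le_mul_of_nonneg_left _ (le_of_lt (inv_pos.2 hcpos))
            simpa [hc] using h1
        _ = 1 := inv_mul_cancel₀ (ne_of_gt hcpos)
    -- separated sets in W := f '' p
    set Sep : Finset Z → Prop := fun U =>
      ↑U ⊆ f '' p ∧ ∀ x ∈ U, ∀ y ∈ U, x ≠ y → μ ≤ n (x - y) with hSep
    have hsub : ∀ U : Finset Z, Sep U → (U.card : ℝ≥0∞) ≤ mZ n μ := by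
      intro U hU
      refine mZ_card_le U ?_ hU.2
      intro z hz
      obtain ⟨x, hx, rfl⟩ := hU.1 hz
      exact hfball x hx
    set A : Set ℕ := {k : ℕ | ∃ U : Finset Z, Sep U ∧ U.card = k} with hA
    have hA0 : 0 ∈ A := ⟨∅, ⟨by simp, by simp⟩, rfl⟩
    have hAbdd : BddAbove A := by
      refine ⟨⌈(mZ n μ).toReal⌉₊, ?_⟩
      rintro k ⟨U, hU, rfl⟩
      have h1 : ((U.card : ℝ≥0∞)).toReal ≤ (mZ n μ).toReal :=
        ENNReal.toReal_mono hm (hsub U hU)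
      simp only [ENNReal.toReal_natCast] at h1
      exact_mod_cast h1.trans (Nat.le_ceil _)
    obtain ⟨U, hU, hUcard⟩ := Nat.sSup_mem ⟨0, hA0⟩ hAbdd
    have hmax : ∀ w ∈ f '' p, ∃ u ∈ U, n (w - u) < μ := by
      intro w hw
      by_contra hcon
      push_neg at hcon
      have hwU : w ∉ U := by
        intro hwU
        have := hcon w hwU
        simp only [sub_self] at this
        rw [aux_n_zero hsn] at this
        linarith
      have hins : Sep (insert w U) := by
        constructor
        · intro z hz
          rcases Finset.mem_insert.1 (by exact_mod_cast hz) with rfl | hz'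
          · exact hw
          · exact hU.1 hz'
        · intro x hx y hy hxy
          rcases Finset.mem_insert.1 hx with rfl | hx' <;>
            rcases Finset.mem_insert.1 hy with rfl | hy'
          · exact absurd rfl hxy
          · exact hcon y hy'
          · calc μ ≤ n (y - x) := hcon x hx'
              _ = n (x - y) := by rw [← aux_n_neg hsn (y - x), neg_sub]
          · exact hU.2 x hx' y hy' hxy
      have hle : (insert w U).card ≤ sSup A := le_csSup hAbdd ⟨_, hins, rfl⟩
      rw [Finset.card_insert_of_notMem hwU, hUcard] at hle
      omega
    -- build the cover
    refine ⟨U.image (fun u => S T '' {x | x ∈ p ∧ n (f x - u) < μ}), ?_, ?_, ?_⟩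
    · exact le_trans (by exact_mod_cast Finset.card_image_le) (hsub U hU)
    · rintro y ⟨x, hx, rfl⟩
      obtain ⟨u, huU, hu⟩ := hmax (f x) ⟨x, hx, rfl⟩
      refine mem_iUnion₂.2 ⟨S T '' {x | x ∈ p ∧ n (f x - u) < μ}, ?_, ⟨x, ⟨hx, hu⟩, rfl⟩⟩
      exact Finset.mem_image_of_mem _ huU
    · intro s hs
      obtain ⟨u, huU, rfl⟩ := Finset.mem_image.1 hs
      constructor
      · exact image_mono (fun x hx => hx.1)
      · rintro a ⟨x, ⟨hx, hxu⟩, rfl⟩ b ⟨y, ⟨hy, hyu⟩, rfl⟩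
        have htri : n (f x - f y) < 2 * μ := by
          have := aux_n_tri hsn (f x) (f y) u
          have h2 : n (u - f y) = n (f y - u) := by
            rw [← aux_n_neg hsn (u - f y), neg_sub]
          linarith
        have hKxy : K x - K y = c • (f x - f y) := by
          simp only [hf, ← smul_sub]
          rw [smul_smul, mul_inv_cancel₀ (ne_of_gt hcpos), one_smul]
          abel_nf
        have hnK : n (K x - K y) ≤ σ * D := by
          rw [hKxy, hsn.2.2, abs_of_pos hcpos]
          have h2μ : 2 * μ = σ / κ := by
            rw [hμdef]; field_simp
          calc c * n (f x - f y) ≤ c * (2 * μ) :=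
                mul_le_mul_of_nonneg_left (le_of_lt htri) (le_of_lt hcpos)
            _ = σ * D := by rw [h2μ, hc]; field_simp
        calc dist (S T x) (S T y) ≤ η * dist x y + n (K x - K y) :=
              hK2 x (hpB hx) y (hpB hy)
          _ ≤ η * D + σ * D := by
              have := hpd x hx y hy
              have := mul_le_mul_of_nonneg_left this hη0
              linarith
          _ = (η + σ) * D := by ring


lemma imageB_subset {S : ℝ → V → V} (hS : IsSemiflow S) {T : ℝ} (hT : 0 < T)
    {B : Set V} (hBinv : S T '' B ⊆ B) : ∀ k : ℕ, S ((k : ℝ) * T) '' B ⊆ B := by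
  intro k
  induction k with
  | zero => simp [hS.1]
  | succ k ih =>
      rintro y ⟨x, hx, rfl⟩
      have hcast : ((k+1 : ℕ) : ℝ) * T = T + (k : ℝ) * T := by push_cast; ring
      have : S ((k+1 : ℕ) * T) x = S T (S ((k : ℝ) * T) x) := by
        rw [hS.2 T ((k : ℝ) * T) hT.le (by positivity) x, hcast]
      rw [this]
      exact hBinv ⟨_, ih ⟨x, hx, rfl⟩, rfl⟩


lemma main_inv {S : ℝ → V → V} (hS : IsSemiflow S) {T : ℝ} (hT : 0 < T)
    {B : Set V} (hBbdd : IsBounded B) (hBinv : S T '' B ⊆ B)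
    {n : Z → ℝ} (hsn : IsSeminormFun n) {η κ σ : ℝ} (hκ : 0 < κ) (hσ : 0 < σ) (hη0 : 0 ≤ η)
    (K : V → Z) (hK1 : ∀ x ∈ B, ∀ y ∈ B, ‖K x - K y‖ ≤ κ * dist x y)
    (hK2 : ∀ x ∈ B, ∀ y ∈ B, dist (S T x) (S T y) ≤ η * dist x y + n (K x - K y))
    (hm : mZ n (σ / (2*κ)) ≠ ⊤) :
    ∀ k : ℕ, ∃ P : Finset (Set V), (P.card : ℝ≥0∞) ≤ (mZ n (σ / (2*κ)))^k ∧
      (S ((k : ℝ) * T) '' B ⊆ ⋃ p ∈ P, p) ∧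
      ∀ p ∈ P, p ⊆ S ((k : ℝ) * T) '' B ∧
        ∀ x ∈ p, ∀ y ∈ p, dist x y ≤ (η + σ)^k * Metric.diam B := by
  classical
  intro k
  induction k with
  | zero =>
      refine ⟨{B}, by simp, by simp [hS.1], ?_⟩
      intro p hp
      simp only [Finset.mem_singleton] at hp
      subst hp
      refine ⟨by simp [hS.1], ?_⟩
      intro x hx y hy
      simpa using dist_le_diam_of_mem hBbdd hx hy
  | succ k ih =>
      obtain ⟨P, hPcard, hPcover, hPmem⟩ := ih
      have hstep : ∀ p ∈ P, ∃ Q : Finset (Set V),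
          (Q.card : ℝ≥0∞) ≤ mZ n (σ / (2*κ)) ∧ (S T '' p ⊆ ⋃ s ∈ Q, s) ∧
          ∀ s ∈ Q, s ⊆ S T '' p ∧
            ∀ u ∈ s, ∀ v ∈ s, dist u v ≤ (η + σ) * ((η + σ)^k * Metric.diam B) := by
        intro p hp
        obtain ⟨hpsub, hpd⟩ := hPmem p hp
        exact core_step hsn hκ hσ hη0 K hK1 hK2 hm p
          (hpsub.trans (imageB_subset hS hT hBinv k)) _
          (by positivity) hpd
      choose! Q hQc hQcov hQmem using hstep
      refine ⟨P.biUnion Q, ?_, ?_, ?_⟩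
      · calc ((P.biUnion Q).card : ℝ≥0∞) ≤ (∑ p ∈ P, (Q p).card : ℕ) := by
              exact_mod_cast Finset.card_biUnion_le
          _ = ∑ p ∈ P, ((Q p).card : ℝ≥0∞) := by push_cast; rfl
          _ ≤ ∑ _p ∈ P, mZ n (σ / (2*κ)) := Finset.sum_le_sum (fun p hp => hQc p hp)
          _ = (P.card : ℝ≥0∞) * mZ n (σ / (2*κ)) := by
              rw [Finset.sum_const, nsmul_eq_mul]
          _ ≤ (mZ n (σ / (2*κ)))^k * mZ n (σ / (2*κ)) := by gcongr
          _ = (mZ n (σ / (2*κ)))^(k+1) := (pow_succ _ _).symm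
      · rintro y ⟨x, hx, rfl⟩
        have hcast : ((k+1 : ℕ) : ℝ) * T = T + (k : ℝ) * T := by push_cast; ring
        have heq : S ((k+1 : ℕ) * T) x = S T (S ((k : ℝ) * T) x) := by
          rw [hS.2 T ((k : ℝ) * T) hT.le (by positivity) x, hcast]
        obtain ⟨p, hp, hxp⟩ := mem_iUnion₂.1 (hPcover ⟨x, hx, rfl⟩)
        have := hQcov p hp ⟨_, hxp, rfl⟩
        obtain ⟨s, hs, hys⟩ := mem_iUnion₂.1 this
        refine mem_iUnion₂.2 ⟨s, Finset.mem_biUnion.2 ⟨p, hp, hs⟩, ?_⟩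
        rwa [heq]
      · intro s hs
        obtain ⟨p, hp, hsQ⟩ := Finset.mem_biUnion.1 hs
        obtain ⟨hssub, hsd⟩ := hQmem p hp s hsQ
        constructor
        · refine hssub.trans ?_
          rintro y ⟨x, hx, rfl⟩
          obtain ⟨z, hz, rfl⟩ := (hPmem p hp).1 hx
          have hcast : ((k+1 : ℕ) : ℝ) * T = T + (k : ℝ) * T := by push_cast; ring
          refine ⟨z, hz, ?_⟩
          rw [hS.2 T ((k : ℝ) * T) hT.le (by positivity) z, hcast]
        · intro x hx y hy
          calc dist x y ≤ (η + σ) * ((η + σ)^k * Metric.diam B) := hsd x hx y hy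
            _ = (η + σ)^(k+1) * Metric.diam B := by ring


lemma coverN_le {G : Set V} {ε : ℝ} (F : Finset V) (h1 : ↑F ⊆ G)
    (h2 : G ⊆ ⋃ x ∈ F, ball x ε) : coverN G ε ≤ (F.card : ℝ≥0∞) := by
  unfold coverN
  exact iInf_le_of_le F (iInf_le_of_le h1 (iInf_le_of_le h2 le_rfl))


end MyAux

section Statement6

variable {V : Type*} [MetricSpace V] {Z : Type*} [NormedAddCommGroup Z] [NormedSpace ℝ Z]

theorem quasi_stability_implies_covering_condition
    (S : ℝ → V → V) (hS : IsSemiflow S) (T : ℝ) (hT : 0 < T)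
    (B : Set V) (hBne : B.Nonempty) (hBbdd : IsBounded B) (hBinv : S T '' B ⊆ B)
    (n : Z → ℝ) (hsn : IsSeminormFun n) (hcs : IsCompactSeminorm n)
    (η κ : ℝ) (hη0 : 0 ≤ η) (hη1 : η < 1) (hκ : 0 < κ)
    (hqs : QuasiStable S T B n η κ) :
    ∀ σ : ℝ, 0 < σ → σ < 1 - η → ∀ k : ℕ, 1 ≤ k →
      coverN (S (k * T) '' B) ((3 / 2 * max (Metric.diam B) 1) * (η + σ) ^ k) ≤
        ENNReal.ofReal 1 * (mZ n (σ / (2 * κ))) ^ k := by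
  classical
  obtain ⟨K, hK1, hK2⟩ := hqs
  intro σ hσ hσ1 k hk
  rcases eq_or_ne (mZ n (σ / (2*κ))) ⊤ with hm | hm
  · rw [hm, ENNReal.top_pow (by omega : k ≠ 0)]
    simp
  · obtain ⟨P, hPcard, hPcover, hPmem⟩ :=
      main_inv hS hT hBbdd hBinv hsn hκ hσ hη0 K hK1 hK2 hm k
    set g : Set V → V := fun p => if h : p.Nonempty then h.some else hBne.some with hg
    set F : Finset V := (P.filter (fun p => p.Nonempty)).image g with hF
    have hq : 0 < η + σ := by linarith
    have hqk : 0 < (η + σ)^k := pow_pos hq k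
    have hlt : (η+σ)^k * Metric.diam B < 3 / 2 * max (Metric.diam B) 1 * (η + σ)^k := by
      have h1 : Metric.diam B ≤ max (Metric.diam B) 1 := le_max_left _ _
      have h2 : (1:ℝ) ≤ max (Metric.diam B) 1 := le_max_right _ _
      nlinarith
    have hF1 : ↑F ⊆ S ((k:ℝ) * T) '' B := by
      intro x hxF
      obtain ⟨p, hp, rfl⟩ := Finset.mem_image.1 (by exact_mod_cast hxF)
      rw [Finset.mem_filter] at hp
      have : g p ∈ p := by rw [hg]; simp only; rw [dif_pos hp.2]; exact hp.2.some_mem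
      exact (hPmem p hp.1).1 this
    have hF2 : S ((k:ℝ)*T) '' B ⊆
        ⋃ x ∈ F, ball x (3 / 2 * max (Metric.diam B) 1 * (η + σ) ^ k) := by
      intro y hy
      obtain ⟨p, hp, hyp⟩ := mem_iUnion₂.1 (hPcover hy)
      have hpne : p.Nonempty := ⟨y, hyp⟩
      have hgp : g p ∈ p := by rw [hg]; simp only; rw [dif_pos hpne]; exact hpne.some_mem
      refine mem_iUnion₂.2 ⟨g p,
        Finset.mem_image_of_mem g (Finset.mem_filter.2 ⟨hp, hpne⟩), ?_⟩
      rw [mem_ball]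
      calc dist y (g p) ≤ (η + σ)^k * Metric.diam B := (hPmem p hp).2 y hyp (g p) hgp
        _ < _ := hlt
    calc coverN (S ((k:ℕ) * T) '' B) ((3 / 2 * max (Metric.diam B) 1) * (η + σ) ^ k)
          ≤ (F.card : ℝ≥0∞) := coverN_le F hF1 hF2
      _ ≤ (P.card : ℝ≥0∞) := by
          exact_mod_cast (Finset.card_image_le.trans (Finset.card_filter_le _ _))
      _ ≤ (mZ n (σ/(2*κ)))^k := hPcard
      _ = ENNReal.ofReal 1 * (mZ n (σ / (2 * κ)))^k := by simp


end Statement6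
end

section
/- Let {S(t) : t ≥ 0} be a semigroup on a nonempty subset V of a Hilbert space X which satisfies the smoothing property on a subset B ⊆ V at time T > 0 with parameters (η,κ) in case (i), i.e., S(T) = C(T) + M(T) on B with ‖C(T)x − C(T)y‖_X ≤ η‖x−y‖_X, M(T): B → Z for a normed space Z that is a subspace of X compactly embedded into X with embedding constant c_{Z,X} (‖z‖_X ≤ c_{Z,X}‖z‖_Z), and ‖M(T)x − M(T)y‖_Z ≤ κ‖x−y‖_X for x,y ∈ B. Then for every ε > 0 with η + εκ < 1 there exist n ∈ ℕ, an n-dimensional subspace X_n ⊆ Z ⊆ X and the orthogonal projection P of X onto X_n such that the semigroup is of Ladyzhenskaya type on B at time T with parameters (n, η + εκ, η + c_{Z,X}κ), i.e., ‖(I−P)S(T)x − (I−P)S(T)y‖_X ≤ (η+εκ)‖x−y‖_X and ‖PS(T)x − PS(T)y‖_X ≤ (η + c_{Z,X}κ)‖x−y‖_X for all x,y ∈ B. -/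
open Filter Metric Set Topology Bornology
open scoped ENNReal

section Defs

variable {X : Type*} [NormedAddCommGroup X]

/-- A semigroup (semiflow) of maps on the subset `V` of `X`. -/
def IsSemiflowOn (V : Set X) (S : ℝ → X → X) : Prop :=
  (∀ x ∈ V, S 0 x = x) ∧ (∀ t : ℝ, 0 ≤ t → ∀ x ∈ V, S t x ∈ V) ∧
    (∀ t s : ℝ, 0 ≤ t → 0 ≤ s → ∀ x ∈ V, S t (S s x) = S (t + s) x)

end Defs

section Statement16

variable {𝕜 : Type*} [RCLike 𝕜]
  {X : Type*} [NormedAddCommGroup X] [InnerProductSpace 𝕜 X] [CompleteSpace X]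
  {Z : Type*} [NormedAddCommGroup Z] [NormedSpace 𝕜 Z]

theorem hilbert_smoothing_implies_ladyzhenskaya
    (V : Set X) (hV : V.Nonempty)
    (S : ℝ → X → X) (hS : IsSemiflowOn V S) (T : ℝ) (hT : 0 < T)
    (B : Set X) (hBV : B ⊆ V)
    -- `Z` is a subspace of `X`, compactly embedded with embedding constant `c`
    (ι : Z →ₗ[𝕜] X) (hι_inj : Function.Injective ι)
    (c : ℝ) (hc : 0 < c) (hbd : ∀ z : Z, ‖ι z‖ ≤ c * ‖z‖)
    (hι_cpt : ∀ s : Set Z, IsBounded s → IsCompact (closure (ι '' s)))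
    -- the smoothing property (case (i)): `S(T) = C(T) + M(T)` on `B`
    (C : X → X) (M : X → Z) (η κ : ℝ) (hη0 : 0 ≤ η) (hη1 : η < 1) (hκ : 0 < κ)
    (hdecomp : ∀ x ∈ B, S T x = C x + ι (M x))
    (hC : ∀ x ∈ B, ∀ y ∈ B, ‖C x - C y‖ ≤ η * ‖x - y‖)
    (hM : ∀ x ∈ B, ∀ y ∈ B, ‖M x - M y‖ ≤ κ * ‖x - y‖) :
    ∀ ε : ℝ, 0 < ε → η + ε * κ < 1 →
      ∃ (n : ℕ) (Xn : Submodule 𝕜 X), Module.finrank 𝕜 Xn = n ∧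
        (Xn : Set X) ⊆ Set.range ι ∧
        ∃ P : X → X,
          -- `P` is the orthogonal projection of `X` onto `Xₙ`
          (∀ x : X, P x ∈ Xn) ∧ (∀ x : X, x - P x ∈ Xnᗮ) ∧
          -- the semigroup is of Ladyzhenskaya type with parameters `(n, η+εκ, η+cκ)`
          (∀ x ∈ B, ∀ y ∈ B,
            ‖(S T x - P (S T x)) - (S T y - P (S T y))‖ ≤ (η + ε * κ) * ‖x - y‖) ∧
          (∀ x ∈ B, ∀ y ∈ B,
            ‖P (S T x) - P (S T y)‖ ≤ (η + c * κ) * ‖x - y‖) := by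
  intro ε hε hεκ
  set δ : ℝ := ε * κ with hδdef
  have hδ : 0 < δ := mul_pos hε hκ
  -- a finite δ-net of `ι '' closedBall 0 κ` consisting of points of this set
  have hTB : TotallyBounded (ι '' closedBall (0 : Z) κ) :=
    ((hι_cpt _ isBounded_closedBall).totallyBounded).subset subset_closure
  obtain ⟨t, hts, htfin, hcov⟩ :=
    totallyBounded_iff_subset.1 hTB {p : X × X | dist p.1 p.2 < δ} (dist_mem_uniformity hδ)
  set Xn : Submodule 𝕜 X := Submodule.span 𝕜 t with hXndef
  haveI : FiniteDimensional 𝕜 Xn := FiniteDimensional.span_of_finite 𝕜 htfin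
  -- the orthogonal projection, as a continuous linear map `X → X`
  set Pc : X →L[𝕜] X := Xn.subtypeL.comp (Xn.orthogonalProjectionOnto) with hPcdef
  have hPc_apply : ∀ u : X, Pc u = (Xn.orthogonalProjectionOnto u : X) := fun u => rfl
  -- minimality of the orthogonal projection
  have hmin : ∀ (u m : X), m ∈ Xn → ‖u - Pc u‖ ≤ ‖u - m‖ := by
    intro u m hm
    rw [hPc_apply, ← Submodule.starProjection_apply, Submodule.starProjection_minimal]
    exact ciInf_le ⟨0, fun b hb => by rcases hb with ⟨x, rfl⟩; positivity⟩ (⟨m, hm⟩ : Xn)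
  have hcontr : ∀ u : X, ‖u - Pc u‖ ≤ ‖u‖ := by
    intro u
    simpa using hmin u 0 (zero_mem Xn)
  have hPnorm : ∀ u : X, ‖Pc u‖ ≤ ‖u‖ := by
    intro u
    have := (Xn.orthogonalProjectionOnto).le_of_opNorm_le (Xn.orthogonalProjectionOnto_norm_le) u
    simpa [hPc_apply] using this
  -- the key estimate for the compact part
  have key : ∀ x ∈ B, ∀ y ∈ B,
      ‖(ι (M x) - ι (M y)) - Pc (ι (M x) - ι (M y))‖ ≤ δ * ‖x - y‖ := by
    intro x hx y hy
    rcases eq_or_ne x y with rfl | hxy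
    · simp
    · set a : ℝ := ‖x - y‖ with hadef
      have ha : 0 < a := by
        simpa [hadef] using norm_pos_iff.2 (sub_ne_zero.2 hxy)
      set z : Z := ((a⁻¹ : ℝ) : 𝕜) • (M x - M y) with hzdef
      have hznorm : ‖z‖ ≤ κ := by
        have h1 : ‖z‖ = a⁻¹ * ‖M x - M y‖ := by
          rw [hzdef, norm_smul, RCLike.norm_ofReal, abs_of_pos (inv_pos.2 ha)]
        rw [h1]
        calc a⁻¹ * ‖M x - M y‖ ≤ a⁻¹ * (κ * a) := by
              apply mul_le_mul_of_nonneg_left _ (inv_pos.2 ha).le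
              simpa [hadef, mul_comm] using hM x hx y hy
          _ = κ := by field_simp
      have hmem : ι z ∈ ι '' closedBall (0 : Z) κ :=
        ⟨z, by simpa [mem_closedBall, dist_eq_norm] using hznorm, rfl⟩
      obtain ⟨p, hp, hdp⟩ := mem_iUnion₂.1 (hcov hmem)
      have hdp' : ‖ι z - p‖ < δ := by simpa [dist_eq_norm] using hdp
      have hpXn : p ∈ Xn := Submodule.subset_span hp
      have hz_est : ‖ι z - Pc (ι z)‖ ≤ δ := le_trans (hmin _ p hpXn) hdp'.le
      -- scale back
      have hscale : ι (M x) - ι (M y) = ((a : ℝ) : 𝕜) • ι z := by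
        rw [hzdef, map_smul, map_sub, smul_smul, ← RCLike.ofReal_mul,
          mul_inv_cancel₀ ha.ne', RCLike.ofReal_one, one_smul]
      have hfact : (ι (M x) - ι (M y)) - Pc (ι (M x) - ι (M y)) =
          ((a : ℝ) : 𝕜) • (ι z - Pc (ι z)) := by
        rw [hscale, ContinuousLinearMap.map_smul, smul_sub]
      calc ‖(ι (M x) - ι (M y)) - Pc (ι (M x) - ι (M y))‖
          = ‖((a : ℝ) : 𝕜) • (ι z - Pc (ι z))‖ := by rw [hfact]
        _ = a * ‖ι z - Pc (ι z)‖ := by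
            rw [norm_smul, RCLike.norm_ofReal, abs_of_pos ha]
        _ ≤ a * δ := mul_le_mul_of_nonneg_left hz_est ha.le
        _ = δ * ‖x - y‖ := by rw [mul_comm, hadef]
  refine ⟨Module.finrank 𝕜 Xn, Xn, rfl, ?_, ⇑Pc, fun x => (Xn.orthogonalProjectionOnto x).2,
    fun x => Submodule.sub_starProjection_mem_orthogonal x, ?_, ?_⟩
  · -- `Xn ⊆ range ι`
    intro x hx
    have hle : Xn ≤ LinearMap.range ι := by
      rw [hXndef, Submodule.span_le]
      intro u hu
      rcases hts hu with ⟨z, _, rfl⟩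
      exact ⟨z, rfl⟩
    exact hle hx
  · -- first Ladyzhenskaya estimate
    intro x hx y hy
    have h1 : (S T x - Pc (S T x)) - (S T y - Pc (S T y)) =
        ((C x - C y) - Pc (C x - C y)) +
          ((ι (M x) - ι (M y)) - Pc (ι (M x) - ι (M y))) := by
      rw [hdecomp x hx, hdecomp y hy]
      simp only [map_add, map_sub]
      abel
    calc ‖(S T x - Pc (S T x)) - (S T y - Pc (S T y))‖
        ≤ ‖(C x - C y) - Pc (C x - C y)‖ +
            ‖(ι (M x) - ι (M y)) - Pc (ι (M x) - ι (M y))‖ := by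
          rw [h1]; exact norm_add_le _ _
      _ ≤ η * ‖x - y‖ + δ * ‖x - y‖ :=
          add_le_add (le_trans (hcontr _) (hC x hx y hy)) (key x hx y hy)
      _ = (η + ε * κ) * ‖x - y‖ := by rw [hδdef]; ring
  · -- second Ladyzhenskaya estimate
    intro x hx y hy
    have h1 : Pc (S T x) - Pc (S T y) = Pc (C x - C y) + Pc (ι (M x) - ι (M y)) := by
      rw [hdecomp x hx, hdecomp y hy]
      simp only [map_add, map_sub]
      abel
    have h2 : ‖ι (M x) - ι (M y)‖ ≤ c * κ * ‖x - y‖ := by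
      calc ‖ι (M x) - ι (M y)‖ = ‖ι (M x - M y)‖ := by rw [map_sub]
        _ ≤ c * ‖M x - M y‖ := hbd _
        _ ≤ c * (κ * ‖x - y‖) := mul_le_mul_of_nonneg_left (hM x hx y hy) hc.le
        _ = c * κ * ‖x - y‖ := by ring
    calc ‖Pc (S T x) - Pc (S T y)‖
        ≤ ‖Pc (C x - C y)‖ + ‖Pc (ι (M x) - ι (M y))‖ := by
          rw [h1]; exact norm_add_le _ _
      _ ≤ η * ‖x - y‖ + c * κ * ‖x - y‖ :=
          add_le_add (le_trans (hPnorm _) (hC x hx y hy)) (le_trans (hPnorm _) h2)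
      _ = (η + c * κ) * ‖x - y‖ := by ring
end Statement16
end
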